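/- Let Γ : D^m → D^n be non-expansive and suppose there is a finite set I ⊆ D^m such that for every β̄ ∈ D^m there exists J ⊆ I of pairwise isometric points with β̄ ∈ cone(J). Then C_Γ = {(x,y) : Γ(β)ᵀx − βᵀy ≥ 0 for all β ∈ I}; in particular C_Γ is a polyhedron. -/
import Mathlib


open scoped RealInnerProductSpace

theorem stmt19 (n m : ℕ)
    (Γ : EuclideanSpace ℝ (Fin m) → EuclideanSpace ℝ (Fin n))
    (hΓ : ∀ β : EuclideanSpace ℝ (Fin m), ‖β‖ = 1 → ‖Γ β‖ = 1)
    (hne : ∀ β β' : EuclideanSpace ℝ (Fin m), ‖β‖ = 1 → ‖β'‖ = 1 →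
      ‖Γ β - Γ β'‖ ≤ ‖β - β'‖)
    (I : Finset (EuclideanSpace ℝ (Fin m)))
    (hI : ∀ β ∈ I, ‖β‖ = 1)
    (hcover : ∀ βbar : EuclideanSpace ℝ (Fin m), ‖βbar‖ = 1 →
      ∃ J : Finset (EuclideanSpace ℝ (Fin m)), J ⊆ I ∧
        (∀ β ∈ J, ∀ β' ∈ J, ⟪Γ β, Γ β'⟫ = ⟪β, β'⟫) ∧
        ∃ c : EuclideanSpace ℝ (Fin m) → ℝ,
          (∀ β ∈ J, 0 ≤ c β) ∧ βbar = ∑ β ∈ J, c β • β)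
    (C : Set (EuclideanSpace ℝ (Fin n) × EuclideanSpace ℝ (Fin m)))
    (hC : C = {p | ∀ β : EuclideanSpace ℝ (Fin m), ‖β‖ = 1 →
      0 ≤ ⟪Γ β, p.1⟫ - ⟪β, p.2⟫}) :
    C = {p | ∀ β ∈ I, 0 ≤ ⟪Γ β, p.1⟫ - ⟪β, p.2⟫} := by
  subst hC
  ext p
  simp only [Set.mem_setOf_eq]
  constructor
  · intro h β hβI
    exact h β (hI β hβI)
  · intro h β hβ
    obtain ⟨J, hJI, hiso, c, hc, hβeq⟩ := hcover β hβ
    have hunit : ∀ b ∈ J, ‖b‖ = 1 := fun b hb => hI b (hJI hb)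
    set v : EuclideanSpace ℝ (Fin n) := ∑ b ∈ J, c b • Γ b with hv
    -- inner β β = 1
    have hββ : ⟪β, β⟫ = 1 := by
      rw [real_inner_self_eq_norm_sq, hβ]; norm_num
    -- ⟪v, v⟫ = 1
    have hvv : ⟪v, v⟫ = 1 := by
      rw [hv, inner_sum]
      have : ∀ b' ∈ J, ⟪∑ b ∈ J, c b • Γ b, c b' • Γ b'⟫ =
          ⟪∑ b ∈ J, c b • b, c b' • b'⟫ := by
        intro b' hb'
        rw [sum_inner, sum_inner]
        refine Finset.sum_congr rfl fun b hb => ?_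
        rw [real_inner_smul_left, real_inner_smul_left, real_inner_smul_right,
          real_inner_smul_right, hiso b hb b' hb']
      rw [Finset.sum_congr rfl this, ← inner_sum, ← hβeq, hββ]
    -- nonexpansiveness gives pointwise inner inequality
    have hkey : ∀ b ∈ J, ⟪β, b⟫ ≤ ⟪Γ β, Γ b⟫ := by
      intro b hb
      have h1 := hne β b hβ (hunit b hb)
      have h2 : ‖Γ β - Γ b‖ ^ 2 ≤ ‖β - b‖ ^ 2 := by
        apply pow_le_pow_left₀ (norm_nonneg _) h1
      rw [norm_sub_sq_real, norm_sub_sq_real, hΓ β hβ, hΓ b (hunit b hb), hβ,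
        hunit b hb] at h2
      linarith
    -- ⟪Γ β, v⟫ ≥ 1
    have hΓβv : (1 : ℝ) ≤ ⟪Γ β, v⟫ := by
      have : ⟪β, β⟫ ≤ ⟪Γ β, v⟫ := by
        nth_rewrite 2 [hβeq]
        rw [hv, inner_sum, inner_sum]
        refine Finset.sum_le_sum fun b hb => ?_
        rw [real_inner_smul_right, real_inner_smul_right]
        exact mul_le_mul_of_nonneg_left (hkey b hb) (hc b hb)
      linarith [hββ]
    -- Γ β = v
    have hΓv : Γ β = v := by
      have hsq : ‖Γ β - v‖ ^ 2 ≤ 0 := by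
        rw [norm_sub_sq_real, hΓ β hβ, real_inner_self_eq_norm_sq] at *
        nlinarith [hvv]
      have : ‖Γ β - v‖ = 0 := le_antisymm (by nlinarith [norm_nonneg (Γ β - v), sq_nonneg ‖Γ β - v‖]) (norm_nonneg _)
      rwa [norm_sub_eq_zero_iff] at this
    -- conclude
    have : ⟪Γ β, p.1⟫ - ⟪β, p.2⟫ = ∑ b ∈ J, c b * (⟪Γ b, p.1⟫ - ⟪b, p.2⟫) := by
      rw [hΓv, hβeq, hv, sum_inner, sum_inner, ← Finset.sum_sub_distrib]
      refine Finset.sum_congr rfl fun b hb => ?_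
      rw [real_inner_smul_left, real_inner_smul_left]; ring
    rw [this]
    exact Finset.sum_nonneg fun b hb => mul_nonneg (hc b hb) (h b (hJI hb))
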